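/- Let 0 < α < 1 and define f : ℝ² → ℝ by f(x) = ‖x‖^α. Then the function x ↦ ‖x‖² · ‖D²f(x)‖², where D²f(x) denotes the second derivative of f at x (a symmetric bilinear map with its operator/Frobenius norm), is integrable on the punctured unit ball {x ∈ ℝ² : 0 < ‖x‖ < 1}. -/

import Mathlib

open MeasureTheory Set

set_option maxHeartbeats 1000000

local notation "E2" => EuclideanSpace ℝ (Fin 2)

private lemma aux_hasFDeriv (x : EuclideanSpace ℝ (Fin 2)) (hx : x ≠ 0) (p : ℝ) :
    HasFDerivAt (fun y : EuclideanSpace ℝ (Fin 2) => ‖y‖ ^ p)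
      ((p * ‖x‖ ^ (p - 2)) • innerSL ℝ x) x := by
  have h2 : (‖x‖ : ℝ) ^ (2 : ℕ) ≠ 0 := pow_ne_zero _ (norm_ne_zero_iff.mpr hx)
  have h := ((hasStrictFDerivAt_norm_sq x).hasFDerivAt).rpow_const (p := p / 2) (Or.inl h2)
  have hfun : (fun y : E2 => (‖y‖ ^ 2 : ℝ) ^ (p / 2)) = fun y : E2 => ‖y‖ ^ p := by
    funext y
    rw [← Real.rpow_natCast ‖y‖ 2, ← Real.rpow_mul (norm_nonneg y)]
    congr 1
    push_cast
    ring
  have hder : (p / 2 * (‖x‖ ^ 2 : ℝ) ^ (p / 2 - 1)) • ((2 : ℕ) • innerSL ℝ x)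
      = (p * ‖x‖ ^ (p - 2)) • innerSL ℝ x := by
    rw [← Nat.cast_smul_eq_nsmul ℝ, smul_smul]
    congr 1
    rw [← Real.rpow_natCast ‖x‖ 2, ← Real.rpow_mul (norm_nonneg x)]
    push_cast
    rw [show (2 : ℝ) * (p / 2 - 1) = p - 2 by ring]
    ring
  rw [← hfun, ← hder]
  exact h

private lemma aux_ibl : IsBoundedLinearMap ℝ (fun y : E2 => innerSL ℝ y) := by
  refine ⟨⟨fun a b => ?_, fun c a => ?_⟩, 1, one_pos, fun y => by
    rw [innerSL_apply_norm, one_mul]⟩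
  · ext v; simp [inner_add_left]
  · ext v; simp [real_inner_smul_left]

private noncomputable def iCLM : E2 →L[ℝ] E2 →L[ℝ] ℝ := aux_ibl.toContinuousLinearMap

private lemma iCLM_apply (y : E2) : iCLM y = innerSL ℝ y := rfl

private lemma iCLM_norm_le : ‖iCLM‖ ≤ 1 :=
  ContinuousLinearMap.opNorm_le_bound _ zero_le_one fun v => by
    rw [iCLM_apply, innerSL_apply_norm, one_mul]

private lemma aux_hasFDeriv2 (α : ℝ) (x : EuclideanSpace ℝ (Fin 2)) (hx : x ≠ 0) :
    HasFDerivAt (fun y : EuclideanSpace ℝ (Fin 2) => (α * ‖y‖ ^ (α - 2)) • innerSL ℝ y)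
      ((α * ‖x‖ ^ (α - 2)) • iCLM +
        ((α * ((α - 2) * ‖x‖ ^ (α - 4))) • innerSL ℝ x).smulRight (innerSL ℝ x)) x := by
  have hc : HasFDerivAt (fun y : E2 => α * ‖y‖ ^ (α - 2))
      ((α * ((α - 2) * ‖x‖ ^ (α - 4))) • innerSL ℝ x) x := by
    have h := (aux_hasFDeriv x hx (α - 2)).const_mul α
    rw [show (α - 2 - 2 : ℝ) = α - 4 by ring] at h
    simpa [smul_smul, mul_assoc] using h
  have hL : HasFDerivAt (fun y : E2 => innerSL ℝ y) iCLM x :=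
    aux_ibl.hasFDerivAt
  exact hc.smul hL

private lemma aux_bound (α : ℝ) (hα0 : 0 < α) (hα1 : α < 1) (x : EuclideanSpace ℝ (Fin 2))
    (hx : x ≠ 0) :
    ‖iteratedFDeriv ℝ 2 (fun y : EuclideanSpace ℝ (Fin 2) => ‖y‖ ^ α) x‖
      ≤ 3 * ‖x‖ ^ (α - 2) := by
  have hr : 0 < ‖x‖ := norm_pos_iff.mpr hx
  have hev : fderiv ℝ (fun y : E2 => ‖y‖ ^ α)
      =ᶠ[nhds x] fun y : E2 => (α * ‖y‖ ^ (α - 2)) • innerSL ℝ y := by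
    filter_upwards [IsOpen.mem_nhds isOpen_compl_singleton
      (show x ∈ ({0}ᶜ : Set (EuclideanSpace ℝ (Fin 2))) by simpa using hx)] with y hy
    exact (aux_hasFDeriv y (by simpa using hy) α).fderiv
  have heq : fderiv ℝ (fderiv ℝ (fun y : E2 => ‖y‖ ^ α)) x
      = (α * ‖x‖ ^ (α - 2)) • iCLM
        + ((α * ((α - 2) * ‖x‖ ^ (α - 4))) • innerSL ℝ x).smulRight (innerSL ℝ x) := by
    rw [hev.fderiv_eq]
    exact (aux_hasFDeriv2 α x hx).fderiv
  have h2 : ‖iteratedFDeriv ℝ 2 (fun y : E2 => ‖y‖ ^ α) x‖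
      = ‖fderiv ℝ (fderiv ℝ (fun y : E2 => ‖y‖ ^ α)) x‖ :=
    calc ‖iteratedFDeriv ℝ 2 (fun y : E2 => ‖y‖ ^ α) x‖
        = ‖iteratedFDeriv ℝ 1 (fderiv ℝ (fun y : E2 => ‖y‖ ^ α)) x‖ :=
          (norm_iteratedFDeriv_fderiv (n := 1)).symm
      _ = ‖iteratedFDeriv ℝ 0 (fderiv ℝ (fderiv ℝ (fun y : E2 => ‖y‖ ^ α))) x‖ :=
          (norm_iteratedFDeriv_fderiv (n := 0)).symm
      _ = ‖fderiv ℝ (fderiv ℝ (fun y : E2 => ‖y‖ ^ α)) x‖ := norm_iteratedFDeriv_zero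
  rw [h2, heq]
  have hpos : (0:ℝ) ≤ ‖x‖ ^ (α - 2) := Real.rpow_nonneg (norm_nonneg x) _
  have hC : 0 ≤ 3 * ‖x‖ ^ (α - 2) := by positivity
  have hrr : ‖x‖ ^ (α - 4) * ‖x‖ * ‖x‖ = ‖x‖ ^ (α - 2) := by
    rw [show α - 2 = α - 4 + 1 + 1 by ring, Real.rpow_add_one hr.ne', Real.rpow_add_one hr.ne']
  have hkey : α * ‖x‖ ^ (α - 2) + α * (2 - α) * ‖x‖ ^ (α - 4) * (‖x‖ * ‖x‖)
      ≤ 3 * ‖x‖ ^ (α - 2) := by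
    have h3 : (0:ℝ) ≤ 3 - (α + α * (2 - α)) := by nlinarith
    nlinarith [mul_nonneg h3 hpos, hrr]
  refine ContinuousLinearMap.opNorm_le_bound _ hC fun v => ?_
  refine ContinuousLinearMap.opNorm_le_bound _ (by positivity) fun w => ?_
  have happ : (((α * ‖x‖ ^ (α - 2)) • iCLM
        + ((α * ((α - 2) * ‖x‖ ^ (α - 4))) • innerSL ℝ x).smulRight (innerSL ℝ x)) v) w
      = (α * ‖x‖ ^ (α - 2)) * (inner ℝ v w)
        + (α * ((α - 2) * ‖x‖ ^ (α - 4))) * (inner ℝ x v) * (inner ℝ x w) := by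
    simp [ContinuousLinearMap.add_apply, ContinuousLinearMap.smul_apply,
      ContinuousLinearMap.smulRight_apply, iCLM_apply, innerSL_apply_apply, smul_eq_mul]
  rw [Real.norm_eq_abs, happ]
  have hcs1 : |(inner ℝ v w)| ≤ ‖v‖ * ‖w‖ := abs_real_inner_le_norm v w
  have hcs2 : |(inner ℝ x v)| ≤ ‖x‖ * ‖v‖ := abs_real_inner_le_norm x v
  have hcs3 : |(inner ℝ x w)| ≤ ‖x‖ * ‖w‖ := abs_real_inner_le_norm x w
  have hc1 : |α * ‖x‖ ^ (α - 2)| = α * ‖x‖ ^ (α - 2) := abs_of_nonneg (by positivity)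
  have hc2 : |α * ((α - 2) * ‖x‖ ^ (α - 4))| = α * (2 - α) * ‖x‖ ^ (α - 4) := by
    rw [abs_mul, abs_mul, abs_of_pos hα0, abs_of_neg (by linarith : α - 2 < 0),
      abs_of_nonneg (Real.rpow_nonneg (norm_nonneg x) _)]
    ring
  have e1 : 0 ≤ α * ‖x‖ ^ (α - 2) := by positivity
  have e2 : 0 ≤ α * (2 - α) * ‖x‖ ^ (α - 4) := by
    have h2a : (0:ℝ) ≤ 2 - α := by linarith
    positivity
  have step1 : |α * ‖x‖ ^ (α - 2) * (inner ℝ v w)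
      + α * ((α - 2) * ‖x‖ ^ (α - 4)) * (inner ℝ x v) * (inner ℝ x w)|
      ≤ α * ‖x‖ ^ (α - 2) * (‖v‖ * ‖w‖)
        + α * (2 - α) * ‖x‖ ^ (α - 4) * ((‖x‖ * ‖v‖) * (‖x‖ * ‖w‖)) := by
    refine le_trans (abs_add_le _ _) (add_le_add ?_ ?_)
    · rw [abs_mul (α * ‖x‖ ^ (α - 2)) (inner ℝ v w), hc1]
      exact mul_le_mul_of_nonneg_left hcs1 e1
    · rw [abs_mul _ (inner ℝ x w),
        abs_mul (α * ((α - 2) * ‖x‖ ^ (α - 4))) (inner ℝ x v), hc2, mul_assoc]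
      exact mul_le_mul_of_nonneg_left (mul_le_mul hcs2 hcs3 (abs_nonneg _) (by positivity)) e2
  refine le_trans step1 ?_
  calc α * ‖x‖ ^ (α - 2) * (‖v‖ * ‖w‖)
        + α * (2 - α) * ‖x‖ ^ (α - 4) * ((‖x‖ * ‖v‖) * (‖x‖ * ‖w‖))
      = (α * ‖x‖ ^ (α - 2) + α * (2 - α) * ‖x‖ ^ (α - 4) * (‖x‖ * ‖x‖)) * (‖v‖ * ‖w‖) := by
        ring
    _ ≤ (3 * ‖x‖ ^ (α - 2)) * (‖v‖ * ‖w‖) := mul_le_mul_of_nonneg_right hkey (by positivity)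
    _ = 3 * ‖x‖ ^ (α - 2) * ‖v‖ * ‖w‖ := by ring

private lemma aux_u_int {α : ℝ} (hα0 : 0 < α) (hα1 : α < 1) :
    IntegrableOn (fun t : ℝ => |t| ^ (α - 1)) (Set.Ioo (-1 : ℝ) 1) := by
  have h1 : IntegrableOn (fun t : ℝ => t ^ (α - 1)) (Set.Ioo (0:ℝ) 1) :=
    (intervalIntegral.integrableOn_Ioo_rpow_iff one_pos).mpr (by linarith)
  have h1' : IntegrableOn (fun t : ℝ => |t| ^ (α - 1)) (Set.Ioo (0:ℝ) 1) := by
    apply h1.congr_fun ?_ measurableSet_Ioo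
    intro t ht
    simp only [abs_of_pos ht.1]
  have h2 : IntegrableOn (fun t : ℝ => |t| ^ (α - 1)) (Set.Ioo (-1:ℝ) 0) := by
    have hiff := (Measure.measurePreserving_neg (volume : Measure ℝ)).integrableOn_comp_preimage
      (Homeomorph.neg ℝ).measurableEmbedding (f := fun t : ℝ => |t| ^ (α - 1))
      (s := Set.Ioo (-1:ℝ) 0)
    rw [← hiff]
    have hset : (Neg.neg ⁻¹' Set.Ioo (-1:ℝ) 0 : Set ℝ) = Set.Ioo 0 1 := by
      ext t
      simp only [Set.mem_preimage, Set.mem_Ioo]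
      constructor
      · rintro ⟨h1, h2⟩; constructor <;> linarith
      · rintro ⟨h1, h2⟩; constructor <;> linarith
    have hfun : ((fun t : ℝ => |t| ^ (α - 1)) ∘ Neg.neg) = fun t : ℝ => |t| ^ (α - 1) := by
      funext t; simp [Function.comp, abs_neg]
    rw [hset, hfun]
    exact h1'
  have h0 : IntegrableOn (fun t : ℝ => |t| ^ (α - 1)) ({0} : Set ℝ) := by
    rw [IntegrableOn, Measure.restrict_eq_zero.mpr (measure_singleton 0)]
    exact integrable_zero_measure
  have hsub : Set.Ioo (-1:ℝ) 1 ⊆ (Set.Ioo (-1:ℝ) 0 ∪ {0}) ∪ Set.Ioo 0 1 := by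
    intro t ht
    rcases lt_trichotomy t 0 with h | h | h
    · exact Or.inl (Or.inl ⟨ht.1, h⟩)
    · exact Or.inl (Or.inr (by simp [h]))
    · exact Or.inr ⟨h, ht.2⟩
  exact ((h2.union h0).union h1').mono_set hsub

theorem stmt_9 (α : ℝ) (hα0 : 0 < α) (hα1 : α < 1)
    (f : EuclideanSpace ℝ (Fin 2) → ℝ) (hf : ∀ x, f x = ‖x‖ ^ α) :
    IntegrableOn (fun x => ‖x‖ ^ 2 * ‖iteratedFDeriv ℝ 2 f x‖ ^ 2)
      {x : EuclideanSpace ℝ (Fin 2) | 0 < ‖x‖ ∧ ‖x‖ < 1} := by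
  have hfeq : f = fun y : EuclideanSpace ℝ (Fin 2) => ‖y‖ ^ α := funext hf
  subst hfeq
  have hSopen : IsOpen {x : E2 | 0 < ‖x‖ ∧ ‖x‖ < 1} :=
    (isOpen_lt continuous_const continuous_norm).and (isOpen_lt continuous_norm continuous_const)
  have hSmeas := hSopen.measurableSet
  have hUopen : IsOpen {y : E2 | y ≠ 0} := isOpen_compl_singleton
  -- smoothness away from 0
  have hcd : ContDiffOn ℝ 2 (fun y : E2 => ‖y‖ ^ α) {y : E2 | y ≠ 0} := by
    intro y hy
    have hy' : (y : E2) ≠ 0 := hy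
    have hq : ContDiffAt ℝ 2 (fun z : E2 => ‖z‖ ^ 2) y := (contDiff_norm_sq ℝ).contDiffAt
    have hne : (‖y‖ ^ 2 : ℝ) ≠ 0 := pow_ne_zero _ (norm_ne_zero_iff.mpr hy')
    have hrp : ContDiffAt ℝ 2 (fun t : ℝ => t ^ (α / 2)) (‖y‖ ^ 2) :=
      Real.contDiffAt_rpow_const_of_ne hne
    have hcomp := hrp.comp y hq
    have hfun : (fun z : E2 => (‖z‖ ^ 2 : ℝ) ^ (α / 2)) = fun z : E2 => ‖z‖ ^ α := by
      funext z
      rw [← Real.rpow_natCast ‖z‖ 2, ← Real.rpow_mul (norm_nonneg z)]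
      congr 1
      push_cast
      ring
    rw [← hfun]
    exact hcomp.contDiffWithinAt
  have hcont : ContinuousOn (fun x : E2 => iteratedFDeriv ℝ 2 (fun y : E2 => ‖y‖ ^ α) x)
      {y : E2 | y ≠ 0} := by
    have h := hcd.continuousOn_iteratedFDerivWithin (m := 2) (by exact_mod_cast le_rfl)
      hUopen.uniqueDiffOn
    exact h.congr fun y hy => (iteratedFDerivWithin_of_isOpen 2 hUopen hy).symm
  have hsub : {x : E2 | 0 < ‖x‖ ∧ ‖x‖ < 1} ⊆ {y : E2 | y ≠ 0} :=
    fun x hx => norm_pos_iff.mp hx.1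
  have haesm : AEStronglyMeasurable
      (fun x : E2 => ‖x‖ ^ 2 * ‖iteratedFDeriv ℝ 2 (fun y : E2 => ‖y‖ ^ α) x‖ ^ 2)
      (volume.restrict {x : E2 | 0 < ‖x‖ ∧ ‖x‖ < 1}) := by
    apply ContinuousOn.aestronglyMeasurable ?_ hSmeas
    exact ((continuous_norm.pow 2).continuousOn).mul (((hcont.mono hsub).norm).pow 2)
  -- the dominating function
  set u : ℝ → ℝ := (Set.Ioo (-1:ℝ) 1).indicator (fun t => |t| ^ (α - 1)) with hu_def
  have huint : Integrable u := (aux_u_int hα0 hα1).integrable_indicator measurableSet_Ioo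
  have hprod : Integrable (fun y : Fin 2 → ℝ => ∏ i, u (y i)) :=
    Integrable.fin_nat_prod fun _ => huint
  have hmp := EuclideanSpace.volume_preserving_symm_measurableEquiv_toLp (Fin 2)
  have hcompInt : Integrable (fun x : E2 => ∏ i, u (x i)) :=
    (hmp.integrable_comp hprod.aestronglyMeasurable).mpr hprod
  have hGint : IntegrableOn (fun x : E2 => 9 * ∏ i, u (x i))
      {x : E2 | 0 < ‖x‖ ∧ ‖x‖ < 1} := (hcompInt.const_mul 9).integrableOn
  refine Integrable.mono' hGint haesm ?_
  -- coordinate hyperplanes are null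
  have hcoord : ∀ i : Fin 2, ∀ᵐ x : E2 ∂volume, x i ≠ 0 := by
    intro i
    have hms : MeasurableSet {y : Fin 2 → ℝ | y i = 0} :=
      measurable_pi_apply i (measurableSet_singleton 0)
    have hnull : volume {x : E2 | x i = 0} = 0 := by
      have hpre : {x : E2 | x i = 0}
          = (MeasurableEquiv.toLp 2 (Fin 2 → ℝ)).symm ⁻¹' {y : Fin 2 → ℝ | y i = 0} := rfl
      rw [hpre, hmp.measure_preimage hms.nullMeasurableSet, volume_pi,
        Measure.pi_hyperplane]
    rw [ae_iff]
    simpa only [not_not] using hnull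
  filter_upwards [ae_restrict_mem hSmeas, ae_restrict_of_ae (hcoord 0),
    ae_restrict_of_ae (hcoord 1)] with x hxS hx0 hx1
  obtain ⟨hr0, hr1⟩ := hxS
  have hxne : x ≠ 0 := norm_pos_iff.mp hr0
  have hb := aux_bound α hα0 hα1 x hxne
  have hiFDnn : (0:ℝ) ≤ ‖iteratedFDeriv ℝ 2 (fun y : E2 => ‖y‖ ^ α) x‖ := norm_nonneg _
  rw [Real.norm_eq_abs, abs_of_nonneg (by positivity)]
  -- coordinates are small
  have hcle : ∀ i : Fin 2, |x i| ≤ ‖x‖ := by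
    intro i
    rw [EuclideanSpace.norm_eq, ← Real.sqrt_sq_eq_abs]
    apply Real.sqrt_le_sqrt
    have := Finset.single_le_sum (f := fun j => ‖x j‖ ^ 2)
      (fun j _ => sq_nonneg _) (Finset.mem_univ i)
    simpa [Real.norm_eq_abs, sq_abs] using this
  have hmem : ∀ i : Fin 2, x i ∈ Set.Ioo (-1:ℝ) 1 := fun i =>
    Set.mem_Ioo.mpr (abs_lt.mp (lt_of_le_of_lt (hcle i) hr1))
  have huval : ∀ i : Fin 2, u (x i) = |x i| ^ (α - 1) := fun i =>
    Set.indicator_of_mem (hmem i) _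
  rw [Fin.prod_univ_two, huval 0, huval 1]
  have hxnorm2 : ‖x‖ ^ 2 = (x 0) ^ 2 + (x 1) ^ 2 := by
    rw [EuclideanSpace.norm_eq, Real.sq_sqrt (by positivity)]
    simp [Fin.sum_univ_two, Real.norm_eq_abs, sq_abs]
  have hab : (0:ℝ) < |x 0| * |x 1| := mul_pos (abs_pos.mpr hx0) (abs_pos.mpr hx1)
  have hle1 : 2 * (|x 0| * |x 1|) ≤ (x 0) ^ 2 + (x 1) ^ 2 := by
    nlinarith [sq_abs (x 0), sq_abs (x 1), sq_nonneg (|x 0| - |x 1|)]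
  have hs1 : ((x 0) ^ 2 + (x 1) ^ 2) ^ (α - 1) ≤ (2 * (|x 0| * |x 1|)) ^ (α - 1) :=
    Real.rpow_le_rpow_of_nonpos (by positivity) hle1 (by linarith)
  have hs2 : (2 * (|x 0| * |x 1|)) ^ (α - 1) ≤ (|x 0| * |x 1|) ^ (α - 1) :=
    Real.rpow_le_rpow_of_nonpos hab (by linarith) (by linarith)
  have hs3 : (|x 0| * |x 1|) ^ (α - 1) = |x 0| ^ (α - 1) * |x 1| ^ (α - 1) :=
    Real.mul_rpow (abs_nonneg _) (abs_nonneg _)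
  have hcomb : ‖x‖ ^ (2:ℕ) * (3 * ‖x‖ ^ (α - 2)) ^ (2:ℕ)
      = 9 * ((x 0) ^ 2 + (x 1) ^ 2) ^ (α - 1) := by
    have e1 : ‖x‖ ^ (2:ℕ) * (‖x‖ ^ (α - 2)) ^ (2:ℕ) = ‖x‖ ^ ((2:ℝ) * (α - 1)) := by
      rw [← Real.rpow_natCast (‖x‖ ^ (α - 2)) 2, ← Real.rpow_mul (norm_nonneg x),
        ← Real.rpow_natCast ‖x‖ 2, ← Real.rpow_add hr0]
      congr 1
      push_cast
      ring
    have e2 : ‖x‖ ^ ((2:ℝ) * (α - 1)) = ((x 0) ^ 2 + (x 1) ^ 2) ^ (α - 1) := by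
      rw [Real.rpow_mul (norm_nonneg x), show (2:ℝ) = ((2:ℕ):ℝ) by norm_num,
        Real.rpow_natCast, hxnorm2]
    calc ‖x‖ ^ (2:ℕ) * (3 * ‖x‖ ^ (α - 2)) ^ (2:ℕ)
        = 9 * (‖x‖ ^ (2:ℕ) * (‖x‖ ^ (α - 2)) ^ (2:ℕ)) := by ring
      _ = 9 * ((x 0) ^ 2 + (x 1) ^ 2) ^ (α - 1) := by rw [e1, e2]
  calc ‖x‖ ^ 2 * ‖iteratedFDeriv ℝ 2 (fun y : E2 => ‖y‖ ^ α) x‖ ^ 2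
      ≤ ‖x‖ ^ 2 * (3 * ‖x‖ ^ (α - 2)) ^ 2 := by
        exact mul_le_mul_of_nonneg_left (pow_le_pow_left₀ hiFDnn hb 2) (by positivity)
    _ = 9 * ((x 0) ^ 2 + (x 1) ^ 2) ^ (α - 1) := hcomb
    _ ≤ 9 * (|x 0| ^ (α - 1) * |x 1| ^ (α - 1)) := by
        have := le_trans hs1 hs2
        rw [hs3] at this
        linarith
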